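/- Let A ∈ ℝ and B > 0, and define g(λ) = Aλ - ln(1 - λB) for λ ∈ [0, 1/B). If (u - A)/B ≥ 1, then sup_{λ ∈ [0,1/B)} (λu - g(λ)) = h((u-A)/B) - 1, where h(v) = v - ln(v); the supremum is attained at λ* = 1/B - 1/(u - A). -/

import Mathlib

/-- Fenchel conjugate computation: with `g λ = A λ - log (1 - λ B)` on `[0, 1/B)` and
`(u - A)/B ≥ 1`, `sup_{λ ∈ [0,1/B)} (λ u - g λ) = h((u-A)/B) - 1` where `h v = v - log v`,
and the supremum is attained at `λ* = 1/B - 1/(u - A)`. -/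
theorem stmt_3 (A B u : ℝ) (hB : 0 < B) (hu : 1 ≤ (u - A) / B) :
    IsGreatest
      {y : ℝ | ∃ l : ℝ, 0 ≤ l ∧ l < 1 / B ∧
        y = l * u - (A * l - Real.log (1 - l * B))}
      (((u - A) / B - Real.log ((u - A) / B)) - 1) ∧
    (0 ≤ 1 / B - 1 / (u - A) ∧ 1 / B - 1 / (u - A) < 1 / B) ∧
    (1 / B - 1 / (u - A)) * u -
        (A * (1 / B - 1 / (u - A)) - Real.log (1 - (1 / B - 1 / (u - A)) * B)) =
      ((u - A) / B - Real.log ((u - A) / B)) - 1 := by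
  have hBA : B ≤ u - A := by
    have := (div_le_div_iff₀ (by norm_num : (0:ℝ) < 1) hB).mp (by simpa using hu)
    linarith [ (le_div_iff₀ hB).mp hu ]
  have huA : 0 < u - A := lt_of_lt_of_le hB hBA
  have h0 : 0 ≤ 1 / B - 1 / (u - A) := by
    have : 1 / (u - A) ≤ 1 / B := one_div_le_one_div_of_le hB hBA
    linarith
  have h1 : 1 / B - 1 / (u - A) < 1 / B := by
    have : 0 < 1 / (u - A) := by positivity
    linarith
  have hsub : 1 - (1 / B - 1 / (u - A)) * B = B / (u - A) := by
    field_simp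
    ring
  have hlog : Real.log (1 - (1 / B - 1 / (u - A)) * B) = - Real.log ((u - A) / B) := by
    rw [hsub, ← Real.log_inv, inv_div]
  have hval : (1 / B - 1 / (u - A)) * u -
        (A * (1 / B - 1 / (u - A)) - Real.log (1 - (1 / B - 1 / (u - A)) * B)) =
      ((u - A) / B - Real.log ((u - A) / B)) - 1 := by
    rw [hlog]
    have : (1 / B - 1 / (u - A)) * u - A * (1 / B - 1 / (u - A)) = (u - A) / B - 1 := by
      field_simp
    linarith
  refine ⟨⟨⟨1 / B - 1 / (u - A), h0, h1, hval.symm⟩, ?_⟩, ⟨h0, h1⟩, hval⟩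
  rintro y ⟨l, hl0, hl1, rfl⟩
  have ht : 0 < 1 - l * B := by
    have := (lt_div_iff₀ hB).mp hl1
    linarith
  -- key: log((1-lB) * v) ≤ (1-lB)*v - 1 where v = (u-A)/B
  have hv : 0 < (u - A) / B := by positivity
  have key := Real.log_le_sub_one_of_pos (mul_pos ht hv)
  rw [Real.log_mul (ne_of_gt ht) (ne_of_gt hv)] at key
  have hexp : (1 - l * B) * ((u - A) / B) = (u - A) / B - l * (u - A) := by
    field_simp
  rw [hexp] at key
  -- key : log(1-lB) + log v ≤ v - l(u-A) - 1
  have : l * u - A * l = l * (u - A) := by ring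
  linarith
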